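/- Let U : ℝ³ → ℝ be a harmonic function on all of ℝ³ such that the partial derivatives ∂U/∂x₂ and ∂U/∂x₃ tend to 0 as |x| → ∞. Then there exist real constants a, b such that U(x₁,x₂,x₃) = a·x₁ + b for all x ∈ ℝ³. -/

import Mathlib

/-- Partial derivative of a function on `Fin n → ℝ` in the `i`-th coordinate direction. -/
noncomputable def pderiv3 (i : Fin 3) (f : (Fin 3 → ℝ) → ℝ) : (Fin 3 → ℝ) → ℝ :=
  fun x => fderiv ℝ f x (Pi.single i 1)


/-- Second derivative test: at an interior local max, the second derivative is nonpositive. -/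
lemma secondDerivTest {φ φ' : ℝ → ℝ} {d : ℝ}
    (h1 : ∀ t, HasDerivAt φ (φ' t) t) (h2 : HasDerivAt φ' d 0)
    (hmax : IsLocalMax φ 0) : d ≤ 0 := by
  by_contra hd
  push_neg at hd
  have h0 : φ' 0 = 0 := hmax.hasDerivAt_eq_zero (h1 0)
  -- slope of φ' tends to d > 0
  have hslope : Filter.Tendsto (slope φ' 0) (nhdsWithin 0 {(0:ℝ)}ᶜ) (nhds d) :=
    hasDerivAt_iff_tendsto_slope.mp h2
  have hev : ∀ᶠ t in nhdsWithin 0 {(0:ℝ)}ᶜ, 0 < slope φ' 0 t :=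
    hslope.eventually (eventually_gt_nhds hd)
  rw [eventually_nhdsWithin_iff, Metric.eventually_nhds_iff] at hev
  obtain ⟨η, hη, hev⟩ := hev
  obtain ⟨δ, hδ, hmax'⟩ := Metric.eventually_nhds_iff.mp hmax
  set t₁ := min η δ / 2 with ht₁
  have ht₁pos : 0 < t₁ := by positivity
  have ht₁η : t₁ < η := by
    have h := min_le_left η δ
    simp only [ht₁]; linarith
  have ht₁δ : t₁ < δ := by
    have h := min_le_right η δ
    simp only [ht₁]; linarith
  -- φ' positive on (0, η)
  have hpos : ∀ t : ℝ, 0 < t → t < η → 0 < φ' t := by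
    intro t ht htη
    have hd1 : dist t 0 < η := by simpa [Real.dist_eq, abs_of_pos ht] using htη
    have h := hev hd1 (by simp [ne_of_gt ht])
    have : slope φ' 0 t = φ' t / t := by simp [slope, h0]; ring
    rw [this] at h
    exact (div_pos_iff.mp h).resolve_right (fun ⟨_, h2⟩ => absurd ht (not_lt.mpr h2.le)) |>.1
  -- MVT on [0, t₁]
  obtain ⟨c, hc, hcs⟩ := exists_hasDerivAt_eq_slope φ φ' ht₁pos
    (fun t _ => (h1 t).continuousAt.continuousWithinAt) (fun t _ => h1 t)
  have hφc : 0 < φ' c := hpos c hc.1 (lt_trans hc.2 ht₁η)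
  have hslope1 : 0 < (φ t₁ - φ 0) / (t₁ - 0) := hcs ▸ hφc
  have : φ 0 < φ t₁ := by
    have h := mul_pos hslope1 (by linarith : (0:ℝ) < t₁ - 0)
    rw [div_mul_cancel₀] at h <;> [linarith; linarith]
  have hd2 : dist t₁ 0 < δ := by simpa [Real.dist_eq, abs_of_pos ht₁pos] using ht₁δ
  have := hmax' hd2
  linarith



/-- Derivative of a 1D slice of a differentiable function. -/
lemma slice_hasDerivAt {W : (Fin 3 → ℝ) → ℝ} (hW : Differentiable ℝ W)
    (p e : Fin 3 → ℝ) (t : ℝ) :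
    HasDerivAt (fun s => W (p + s • e)) (fderiv ℝ W (p + t • e) e) t := by
  have hγ : HasDerivAt (fun s : ℝ => p + s • e) e t := by
    simpa using ((hasDerivAt_id t).smul_const e).const_add p
  simpa [Function.comp_def] using ((hW (p + t • e)).hasFDerivAt.comp_hasDerivAt t hγ)


lemma pderiv3_contDiff {W : (Fin 3 → ℝ) → ℝ} (hW : ContDiff ℝ 2 W) (i : Fin 3) :
    ContDiff ℝ 1 (pderiv3 i W) :=
  (hW.fderiv_right (by norm_num)).clm_apply contDiff_const

/-- second derivative of a slice in a single coordinate direction -/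
lemma slice_hasDerivAt2 {W : (Fin 3 → ℝ) → ℝ} (hW : ContDiff ℝ 2 W) (i : Fin 3)
    (p : Fin 3 → ℝ) (t : ℝ) :
    HasDerivAt (fun s => pderiv3 i W (p + s • (Pi.single i 1 : Fin 3 → ℝ)))
      (pderiv3 i (pderiv3 i W) (p + t • (Pi.single i 1 : Fin 3 → ℝ))) t :=
  slice_hasDerivAt ((pderiv3_contDiff hW i).differentiable one_ne_zero) p _ t




lemma qsum (p : Fin 3 → ℝ) (t : ℝ) (i : Fin 3) :
    (∑ j, (p + t • (Pi.single i 1 : Fin 3 → ℝ)) j ^ 2)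
      = (∑ j, p j ^ 2) + (2 * p i * t + t ^ 2) := by
  rw [Fin.sum_univ_three, Fin.sum_univ_three]
  fin_cases i <;> simp [Pi.single_apply] <;> ring

lemma norm_single_le (i : Fin 3) : ‖(Pi.single i 1 : Fin 3 → ℝ)‖ ≤ 1 := by
  apply pi_norm_le_iff_of_nonneg zero_le_one |>.mpr
  intro j
  rcases eq_or_ne j i with h | h <;> simp [Pi.single_apply, h]

lemma abs_le_pi_norm (p : Fin 3 → ℝ) (j : Fin 3) : |p j| ≤ ‖p‖ := norm_le_pi_norm p j










/-- One-sided maximum principle / Phragmén–Lindelöf at infinity. -/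
lemma maxp_le {W : (Fin 3 → ℝ) → ℝ} (hW : ContDiff ℝ 2 W)
    (hharm : ∀ x, (∑ i : Fin 3, pderiv3 i (pderiv3 i W) x) = 0)
    (hdec : ∀ ε : ℝ, 0 < ε → ∃ R : ℝ, ∀ x : Fin 3 → ℝ, R ≤ ‖x‖ → W x ≤ ε)
    (x₀ : Fin 3 → ℝ) : W x₀ ≤ 0 := by
  have main : ∀ ε : ℝ, 0 < ε → W x₀ ≤ ε := by
    intro ε hε
    obtain ⟨R, hR⟩ := hdec ε hε
    set M := max R ‖x₀‖ with hM
    have hMx : ‖x₀‖ ≤ M := le_max_right _ _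
    have hM0 : 0 ≤ M := le_trans (norm_nonneg _) hMx
    have key : ∀ γ : ℝ, 0 < γ → W x₀ ≤ ε + γ * (3 * M ^ 2) := by
      intro γ hγ
      set F := fun x : Fin 3 → ℝ => W x + γ * ∑ j, x j ^ 2 with hF
      have hFc : Continuous F := by
        apply hW.continuous.add
        exact continuous_const.mul (continuous_finset_sum _ (fun j _ => (continuous_apply j).pow 2))
      have hne : (Metric.closedBall (0 : Fin 3 → ℝ) M).Nonempty :=
        ⟨0, by simpa using hM0⟩
      obtain ⟨p, hpmem, hpmax⟩ := (isCompact_closedBall (0 : Fin 3 → ℝ) M).exists_isMaxOn hne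
        hFc.continuousOn
      have hpM : ‖p‖ ≤ M := by simpa [mem_closedBall_zero_iff] using hpmem
      by_cases hb : ‖p‖ < M
      · exfalso
        have key2 : ∀ i : Fin 3, pderiv3 i (pderiv3 i W) p + 2 * γ ≤ 0 := by
          intro i
          set e := (Pi.single i 1 : Fin 3 → ℝ) with he
          -- the slice has a local max at 0
          have hloc : IsLocalMax (fun t : ℝ => F (p + t • e)) 0 := by
            have hmem : ∀ᶠ t : ℝ in nhds 0, p + t • e ∈ Metric.closedBall (0 : Fin 3 → ℝ) M := by
              rw [Metric.eventually_nhds_iff]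
              refine ⟨M - ‖p‖, by linarith, fun t ht => ?_⟩
              rw [mem_closedBall_zero_iff]
              calc ‖p + t • e‖ ≤ ‖p‖ + ‖t • e‖ := norm_add_le _ _
                _ ≤ ‖p‖ + |t| * 1 := by
                    rw [norm_smul, Real.norm_eq_abs]
                    have h1 := norm_single_le i
                    have h0 : (0:ℝ) ≤ |t| := abs_nonneg t
                    nlinarith
                _ ≤ M := by
                    have : |t| < M - ‖p‖ := by simpa [Real.dist_eq] using ht
                    linarith
            refine hmem.mono fun t ht => ?_
            have := hpmax ht
            simpa using this
          -- rewrite the slice into an explicit form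
          have hGeq : (fun t : ℝ => F (p + t • e)) =
              fun t : ℝ => (W (p + t • e) + γ * (2 * p i * t + t ^ 2)) + γ * ∑ j, p j ^ 2 := by
            funext t
            simp only [hF]
            rw [qsum p t i]
            ring
          rw [hGeq] at hloc
          have hWd : Differentiable ℝ W := hW.differentiable (by norm_num)
          have hquad : ∀ t : ℝ, HasDerivAt (fun s : ℝ => γ * (2 * p i * s + s ^ 2))
              (γ * (2 * p i + 2 * t)) t := by
            intro t
            have h := (((hasDerivAt_id t).const_mul (2 * p i)).add
              (hasDerivAt_pow 2 t)).const_mul γ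
            refine h.congr_deriv ?_
            ring
          have h1 : ∀ t : ℝ, HasDerivAt
              (fun s : ℝ => (W (p + s • e) + γ * (2 * p i * s + s ^ 2)) + γ * ∑ j, p j ^ 2)
              (pderiv3 i W (p + t • e) + γ * (2 * p i + 2 * t)) t := by
            intro t
            exact ((slice_hasDerivAt hWd p e t).add (hquad t)).add_const _
          have h2 : HasDerivAt (fun t : ℝ => pderiv3 i W (p + t • e) + γ * (2 * p i + 2 * t))
              (pderiv3 i (pderiv3 i W) p + 2 * γ) 0 := by
            have ha := slice_hasDerivAt2 hW i p 0
            have hb2 : HasDerivAt (fun t : ℝ => γ * (2 * p i + 2 * t)) (γ * 2) 0 := by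
              have hc2 := (((hasDerivAt_id (0:ℝ)).const_mul 2).const_add (2 * p i)).const_mul γ
              refine hc2.congr_deriv ?_
              ring
            have hd2 := ha.add hb2
            simp only [zero_smul, add_zero] at hd2
            refine hd2.congr_deriv ?_
            ring
          exact secondDerivTest h1 h2 hloc
        have hsum := hharm p
        rw [Fin.sum_univ_three] at hsum
        have k0 := key2 0
        have k1 := key2 1
        have k2 := key2 2
        linarith
      · have hpeq : ‖p‖ = M := le_antisymm hpM (not_lt.mp hb)
        have hWp : W p ≤ ε := hR p (hpeq ▸ le_max_left _ _)
        have hle : F x₀ ≤ F p := hpmax (by simpa [mem_closedBall_zero_iff] using hMx)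
        have hq0 : (0:ℝ) ≤ ∑ j, x₀ j ^ 2 := Finset.sum_nonneg fun j _ => sq_nonneg _
        have hqp : (∑ j, p j ^ 2) ≤ 3 * M ^ 2 := by
          rw [Fin.sum_univ_three]
          have h0 := norm_le_pi_norm p 0
          have h1 := norm_le_pi_norm p 1
          have h2 := norm_le_pi_norm p 2
          simp only [Real.norm_eq_abs] at h0 h1 h2
          have := abs_nonneg (p 0)
          nlinarith [sq_abs (p 0), sq_abs (p 1), sq_abs (p 2), hpM, abs_nonneg (p 1), abs_nonneg (p 2)]
        simp only [hF] at hle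
        nlinarith
    by_contra hc
    push_neg at hc
    have h3M : (0:ℝ) < 3 * M ^ 2 + 1 := by positivity
    have := key ((W x₀ - ε) / (2 * (3 * M ^ 2 + 1))) (div_pos (by linarith) (by positivity))
    have hfrac : (W x₀ - ε) / (2 * (3 * M ^ 2 + 1)) * (3 * M ^ 2) ≤ (W x₀ - ε) / 2 := by
      rw [div_mul_eq_mul_div, div_le_div_iff₀ (by positivity) (by norm_num)]
      nlinarith
    linarith
  by_contra hc
  push_neg at hc
  have := main (W x₀ / 2) (by linarith)
  linarith





lemma pderiv3_neg (W : (Fin 3 → ℝ) → ℝ) (i : Fin 3) :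
    pderiv3 i (fun x => -W x) = fun x => -pderiv3 i W x := by
  funext x
  simp [pderiv3, fderiv_neg]

lemma pderiv3_translate {W : (Fin 3 → ℝ) → ℝ} (hWd : Differentiable ℝ W)
    (c : Fin 3 → ℝ) (i : Fin 3) :
    pderiv3 i (fun x => W (x + c)) = fun x => pderiv3 i W (x + c) := by
  funext x
  have h : HasFDerivAt (fun y => W (y + c)) (fderiv ℝ W (x + c)) x := by
    have := (hWd (x + c)).hasFDerivAt.comp x ((hasFDerivAt_id x).add_const c)
    simpa [Function.comp_def] using this
  simp only [pderiv3, h.fderiv]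

lemma pderiv3_sub {W₁ W₂ : (Fin 3 → ℝ) → ℝ} (h1 : Differentiable ℝ W₁)
    (h2 : Differentiable ℝ W₂) (i : Fin 3) :
    pderiv3 i (fun x => W₁ x - W₂ x) = fun x => pderiv3 i W₁ x - pderiv3 i W₂ x := by
  funext x
  simp [pderiv3, fderiv_fun_sub (h1 x) (h2 x)]

/-- Two-sided vanishing principle. -/
lemma maxp_zero {W : (Fin 3 → ℝ) → ℝ} (hW : ContDiff ℝ 2 W)
    (hharm : ∀ x, (∑ i : Fin 3, pderiv3 i (pderiv3 i W) x) = 0)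
    (hdec : ∀ ε : ℝ, 0 < ε → ∃ R : ℝ, ∀ x : Fin 3 → ℝ, R ≤ ‖x‖ → |W x| ≤ ε)
    (x₀ : Fin 3 → ℝ) : W x₀ = 0 := by
  have h1 : W x₀ ≤ 0 := by
    apply maxp_le hW hharm _ x₀
    intro ε hε
    obtain ⟨R, hR⟩ := hdec ε hε
    exact ⟨R, fun x hx => le_trans (le_abs_self _) (hR x hx)⟩
  have h2 : -W x₀ ≤ 0 := by
    apply maxp_le (W := fun x => -W x) hW.neg _ _ x₀
    · intro x
      have : ∀ i : Fin 3, pderiv3 i (pderiv3 i fun x => -W x) x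
          = -(pderiv3 i (pderiv3 i W) x) := by
        intro i
        rw [pderiv3_neg W i]
        have : (fun x => -pderiv3 i W x) = fun x => -(pderiv3 i W) x := rfl
        rw [this, pderiv3_neg (pderiv3 i W) i]
      simp only [this]
      rw [Finset.sum_neg_distrib]
      rw [hharm x, neg_zero]
    · intro ε hε
      obtain ⟨R, hR⟩ := hdec ε hε
      exact ⟨R, fun x hx => le_trans (neg_le_abs _) (hR x hx)⟩
  linarith










lemma translate_invariant {U : (Fin 3 → ℝ) → ℝ}
    (hC2 : ContDiff ℝ 2 U)
    (hharm : ∀ x, (∑ i : Fin 3, pderiv3 i (pderiv3 i U) x) = 0)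
    (k : Fin 3)
    (hk : ∀ ε : ℝ, 0 < ε → ∃ R : ℝ, 0 < R ∧ ∀ x : Fin 3 → ℝ, R ≤ ‖x‖ →
      |pderiv3 k U x| < ε)
    (s : ℝ) (x₀ : Fin 3 → ℝ) :
    U (x₀ + s • (Pi.single k 1 : Fin 3 → ℝ)) = U x₀ := by
  have hUd : Differentiable ℝ U := hC2.differentiable (by norm_num)
  set e := (Pi.single k 1 : Fin 3 → ℝ) with he
  set V := fun x => U (x + s • e) - U x with hV
  have htransC2 : ContDiff ℝ 2 (fun x => U (x + s • e)) :=
    hC2.comp (contDiff_id.add contDiff_const)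
  have htransd : Differentiable ℝ (fun x => U (x + s • e)) :=
    htransC2.differentiable (by norm_num)
  have hVC2 : ContDiff ℝ 2 V := htransC2.sub hC2
  -- first partials of V
  have hpdV : ∀ i : Fin 3, pderiv3 i V
      = fun x => pderiv3 i U (x + s • e) - pderiv3 i U x := by
    intro i
    rw [hV, pderiv3_sub htransd hUd i, pderiv3_translate hUd (s • e) i]
  -- V is harmonic
  have hVharm : ∀ x, (∑ i : Fin 3, pderiv3 i (pderiv3 i V) x) = 0 := by
    intro x
    have : ∀ i : Fin 3, pderiv3 i (pderiv3 i V) x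
        = pderiv3 i (pderiv3 i U) (x + s • e) - pderiv3 i (pderiv3 i U) x := by
      intro i
      rw [hpdV i]
      have hgd : Differentiable ℝ (pderiv3 i U) :=
        (pderiv3_contDiff hC2 i).differentiable one_ne_zero
      have hgtd : Differentiable ℝ (fun x => pderiv3 i U (x + s • e)) :=
        hgd.comp (differentiable_id.add_const (s • e))
      rw [pderiv3_sub hgtd hgd i, pderiv3_translate hgd (s • e) i]
    simp only [this]
    rw [Finset.sum_sub_distrib, hharm (x + s • e), hharm x, sub_zero]
  -- decay of V
  have hVdec : ∀ ε : ℝ, 0 < ε → ∃ R : ℝ, ∀ x : Fin 3 → ℝ, R ≤ ‖x‖ → |V x| ≤ ε := by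
    intro ε hε
    have hden : (0:ℝ) < |s| + 1 := by positivity
    obtain ⟨R, hRpos, hR⟩ := hk (ε / (|s| + 1)) (by positivity)
    refine ⟨R + |s|, fun x hx => ?_⟩
    rcases eq_or_ne s 0 with hs0 | hs0
    · simp [hV, hs0, le_of_lt hε]
    -- MVT
    have hφ : ∀ t : ℝ, HasDerivAt (fun t => U (x + t • e)) (pderiv3 k U (x + t • e)) t :=
      fun t => slice_hasDerivAt hUd x e t
    have key : ∃ ξ : ℝ, |ξ| ≤ |s| ∧ V x = s * pderiv3 k U (x + ξ • e) := by
      rcases lt_or_gt_of_ne hs0 with hs | hs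
      · -- s < 0 : apply MVT on [s, 0]
        obtain ⟨ξ, hξ, heq⟩ := exists_hasDerivAt_eq_slope (fun t => U (x + t • e))
          (fun t => pderiv3 k U (x + t • e)) hs
          (fun t _ => (hφ t).continuousAt.continuousWithinAt) (fun t _ => hφ t)
        obtain ⟨hξ1, hξ2⟩ := hξ
        refine ⟨ξ, ?_, ?_⟩
        · rw [abs_of_neg hξ2, abs_of_neg hs]; linarith
        · simp only [zero_smul, add_zero, sub_zero, zero_sub] at heq
          simp only [hV]
          rw [heq]
          have hs' : -s ≠ 0 := neg_ne_zero.mpr hs0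
          field_simp
          ring
      · -- 0 < s : apply MVT on [0, s]
        obtain ⟨ξ, hξ, heq⟩ := exists_hasDerivAt_eq_slope (fun t => U (x + t • e))
          (fun t => pderiv3 k U (x + t • e)) hs
          (fun t _ => (hφ t).continuousAt.continuousWithinAt) (fun t _ => hφ t)
        obtain ⟨hξ1, hξ2⟩ := hξ
        refine ⟨ξ, ?_, ?_⟩
        · rw [abs_of_pos hξ1, abs_of_pos hs]; linarith
        · simp only [zero_smul, add_zero, sub_zero, zero_sub] at heq
          simp only [hV]
          rw [heq]
          field_simp
    obtain ⟨ξ, hξs, hVeq⟩ := key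
    have hnorm : R ≤ ‖x + ξ • e‖ := by
      have h1 : ‖x‖ ≤ ‖x + ξ • e‖ + ‖ξ • e‖ := by
        calc ‖x‖ = ‖(x + ξ • e) - ξ • e‖ := by rw [add_sub_cancel_right]
          _ ≤ ‖x + ξ • e‖ + ‖ξ • e‖ := norm_sub_le _ _
      have h2 : ‖ξ • e‖ ≤ |ξ| := by
        rw [norm_smul, Real.norm_eq_abs]
        have := norm_single_le k
        nlinarith [abs_nonneg ξ]
      linarith
    have hsmall := hR _ hnorm
    rw [hVeq, abs_mul]
    calc |s| * |pderiv3 k U (x + ξ • e)| ≤ |s| * (ε / (|s| + 1)) := by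
          have := abs_nonneg s
          gcongr
      _ ≤ ε := by
          rw [mul_div_assoc']
          rw [div_le_iff₀ hden]
          nlinarith [abs_nonneg s]
  have := maxp_zero hVC2 hVharm hVdec x₀
  simp only [hV] at this
  linarith







/-- A harmonic function on ℝ³ whose partial derivatives in the second and third
coordinates tend to 0 at infinity is an affine function of the first coordinate. -/
theorem harmonic_decay_two_partials_implies_affine_in_x1
    (U : (Fin 3 → ℝ) → ℝ)
    (hC2 : ContDiff ℝ 2 U)
    (hharm : ∀ x, (∑ i : Fin 3, pderiv3 i (pderiv3 i U) x) = 0)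
    (hdecay : ∀ ε : ℝ, 0 < ε → ∃ R : ℝ, 0 < R ∧ ∀ x : Fin 3 → ℝ, R ≤ ‖x‖ →
      |pderiv3 1 U x| < ε ∧ |pderiv3 2 U x| < ε) :
    ∃ a b : ℝ, ∀ x : Fin 3 → ℝ, U x = a * x 0 + b := by
  have hUd : Differentiable ℝ U := hC2.differentiable (by norm_num)
  have trans1 := translate_invariant hC2 hharm 1 (fun ε hε => by
    obtain ⟨R, hR0, hR⟩ := hdecay ε hε
    exact ⟨R, hR0, fun x hx => (hR x hx).1⟩)
  have trans2 := translate_invariant hC2 hharm 2 (fun ε hε => by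
    obtain ⟨R, hR0, hR⟩ := hdecay ε hε
    exact ⟨R, hR0, fun x hx => (hR x hx).2⟩)
  -- first partials in directions 1 and 2 vanish
  have pdzero : ∀ k : Fin 3,
      (∀ (s : ℝ) (y : Fin 3 → ℝ), U (y + s • (Pi.single k 1 : Fin 3 → ℝ)) = U y) →
      ∀ x, pderiv3 k U x = 0 := by
    intro k htrans x
    have h1 : HasDerivAt (fun s : ℝ => U (x + s • (Pi.single k 1 : Fin 3 → ℝ)))
        (fderiv ℝ U (x + (0:ℝ) • (Pi.single k 1 : Fin 3 → ℝ)) (Pi.single k 1)) 0 :=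
      slice_hasDerivAt hUd x _ 0
    have heq : (fun s : ℝ => U (x + s • (Pi.single k 1 : Fin 3 → ℝ))) = fun _ => U x :=
      funext fun s => htrans s x
    rw [heq] at h1
    have h2 : HasDerivAt (fun _ : ℝ => U x) 0 0 := hasDerivAt_const 0 _
    have := h1.unique h2
    simpa [pderiv3] using this
  have pd1 : ∀ x, pderiv3 1 U x = 0 := pdzero 1 trans1
  have pd2 : ∀ x, pderiv3 2 U x = 0 := pdzero 2 trans2
  -- second partials in directions 1, 2 vanish
  have pdd1 : ∀ x, pderiv3 1 (pderiv3 1 U) x = 0 := by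
    intro x
    have : pderiv3 1 U = fun _ => (0:ℝ) := funext pd1
    rw [this]
    simp [pderiv3]
  have pdd2 : ∀ x, pderiv3 2 (pderiv3 2 U) x = 0 := by
    intro x
    have : pderiv3 2 U = fun _ => (0:ℝ) := funext pd2
    rw [this]
    simp [pderiv3]
  have pdd0 : ∀ x, pderiv3 0 (pderiv3 0 U) x = 0 := by
    intro x
    have := hharm x
    rw [Fin.sum_univ_three] at this
    rw [pdd1 x, pdd2 x] at this
    linarith
  -- the function along the first axis
  set e0 := (Pi.single 0 1 : Fin 3 → ℝ) with he0
  have hg : Differentiable ℝ (pderiv3 0 U) := (pderiv3_contDiff hC2 0).differentiable one_ne_zero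
  have hψ' : ∀ t : ℝ, HasDerivAt (fun u : ℝ => pderiv3 0 U ((0:Fin 3 → ℝ) + u • e0))
      (pderiv3 0 (pderiv3 0 U) ((0:Fin 3 → ℝ) + t • e0)) t :=
    fun t => slice_hasDerivAt hg 0 e0 t
  have hψ'const : ∀ t : ℝ, pderiv3 0 U ((0:Fin 3 → ℝ) + t • e0)
      = pderiv3 0 U ((0:Fin 3 → ℝ) + (0:ℝ) • e0) := by
    intro t
    have hdiff : Differentiable ℝ (fun u : ℝ => pderiv3 0 U ((0:Fin 3 → ℝ) + u • e0)) :=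
      fun u => ((hψ' u).differentiableAt)
    have hderiv : ∀ u : ℝ, deriv (fun u : ℝ => pderiv3 0 U ((0:Fin 3 → ℝ) + u • e0)) u = 0 := by
      intro u
      rw [(hψ' u).deriv]
      exact pdd0 _
    exact is_const_of_deriv_eq_zero hdiff hderiv t 0
  set a := pderiv3 0 U ((0:Fin 3 → ℝ) + (0:ℝ) • e0) with ha
  -- ψ t = U (t • e0) is affine
  have hψ : ∀ t : ℝ, HasDerivAt (fun u : ℝ => U ((0:Fin 3 → ℝ) + u • e0))
      (pderiv3 0 U ((0:Fin 3 → ℝ) + t • e0)) t := fun t => slice_hasDerivAt hUd 0 e0 t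
  have hθ : ∀ t : ℝ, HasDerivAt (fun u : ℝ => U ((0:Fin 3 → ℝ) + u • e0) - a * u) 0 t := by
    intro t
    have h2 : HasDerivAt (fun u : ℝ => a * u) a t := by
      simpa using (hasDerivAt_id t).const_mul a
    have := (hψ t).sub h2
    rw [hψ'const t] at this
    simpa [Pi.sub_def] using this
  have hθconst : ∀ t : ℝ, U ((0:Fin 3 → ℝ) + t • e0) - a * t
      = U ((0:Fin 3 → ℝ) + (0:ℝ) • e0) - a * 0 := by
    intro t
    exact is_const_of_deriv_eq_zero (fun u => (hθ u).differentiableAt)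
      (fun u => (hθ u).deriv) t 0
  refine ⟨a, U 0, fun x => ?_⟩
  -- decompose x
  have hdecomp : x = ((x 0) • e0 + (x 1) • (Pi.single 1 1 : Fin 3 → ℝ))
      + (x 2) • (Pi.single 2 1 : Fin 3 → ℝ) := by
    funext j
    fin_cases j <;> simp [he0]
  have step2 : U x = U ((x 0) • e0 + (x 1) • (Pi.single 1 1 : Fin 3 → ℝ)) := by
    have hx : U x = U (((x 0) • e0 + (x 1) • (Pi.single 1 1 : Fin 3 → ℝ))
        + (x 2) • (Pi.single 2 1 : Fin 3 → ℝ)) := by rw [← hdecomp]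
    rw [hx]
    exact trans2 (x 2) _
  have step1 : U ((x 0) • e0 + (x 1) • (Pi.single 1 1 : Fin 3 → ℝ)) = U ((x 0) • e0) :=
    trans1 (x 1) _
  have step0 := hθconst (x 0)
  simp only [zero_add, zero_smul, mul_zero, sub_zero] at step0
  rw [step2, step1]
  have : U ((x 0) • e0) - a * (x 0) = U 0 := by
    have := hθconst (x 0)
    simp only [zero_add, zero_smul, mul_zero, sub_zero] at this
    linarith [this]
  linarith [this]
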